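/- Let L̄ be a finite-dimensional Lie algebra over a field k, and let J ∈ Λ³(L̄, ad) be the 3-form induced (via χ) by the Jacobiator of any bracket algebra lift (B,[·,·]) over R_{k+1} of a Lie algebra L over R_k with reduction L̄. Then J is a cocycle in the Chevalley–Eilenberg complex of L̄ with coefficients in the adjoint representation: dJ = 0. -/

import Mathlib

open Pointwise

/-- `Rmod R π m` is the quotient ring `R/π^m R`. -/
abbrev Rmod (R : Type) [CommRing R] (π : R) (m : ℕ) : Type :=
  R ⧸ Ideal.span {π ^ m}

section Setup

variable (R : Type) [CommRing R] (π : R) (k : ℕ)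
variable (B : Type) [AddCommGroup B] [Module (Rmod R π (k + 1)) B]

/-- The image of `π` in `R_{k+1}`. -/
noncomputable abbrev pbar : Rmod R π (k + 1) := Ideal.Quotient.mk _ π

/-- The submodule `π^k B` of `B`. -/
noncomputable abbrev pikB : Submodule (Rmod R π (k + 1)) B :=
  (pbar R π k) ^ k • (⊤ : Submodule (Rmod R π (k + 1)) B)

/-- The submodule `π B` of `B`. -/
noncomputable abbrev piB : Submodule (Rmod R π (k + 1)) B :=
  (pbar R π k) • (⊤ : Submodule (Rmod R π (k + 1)) B)

/-- `L = B/π^k B`, the reduction of `B` to a module over `R_k`. -/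
noncomputable abbrev Lred := B ⧸ pikB R π k B

/-- `L̄ = B/πB`, the reduction of `B` to a vector space over the residue field. -/
noncomputable abbrev Lbar := B ⧸ piB R π k B

/-- The reduction map `mod : B → L = B/π^k B`. -/
noncomputable abbrev modk : B →ₗ[Rmod R π (k + 1)] Lred R π k B :=
  (pikB R π k B).mkQ

/-- The reduction map `λ : B → L̄ = B/πB`. -/
noncomputable abbrev lam : B →ₗ[Rmod R π (k + 1)] Lbar R π k B :=
  (piB R π k B).mkQ

/-- `ψ : L̄ → B`, the map sending `x mod πB` to `π^k x`; its (corestriction to `π^k B`)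
is the inverse of the canonical isomorphism `χ : π^k B → L̄`. -/
noncomputable def psi : Lbar R π k B →ₗ[Rmod R π (k + 1)] B :=
  Submodule.liftQ _ ((pbar R π k) ^ k • (LinearMap.id : B →ₗ[Rmod R π (k + 1)] B))
    (by
      intro x hx
      rw [← SetLike.mem_coe, Submodule.coe_pointwise_smul, Set.mem_smul_set] at hx
      obtain ⟨y, -, rfl⟩ := hx
      have h0 : (pbar R π k) ^ k * pbar R π k = 0 := by
        rw [← pow_succ, ← map_pow, Ideal.Quotient.eq_zero_iff_mem]
        exact Ideal.mem_span_singleton_self _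
      simp only [LinearMap.mem_ker, LinearMap.smul_apply, LinearMap.id_apply, smul_smul]
      rw [h0, zero_smul])

@[simp] theorem psi_apply (x : B) :
    psi R π k B (lam R π k B x) = ((pbar R π k) ^ k) • x := rfl

end Setup



theorem bracket_skew {A M : Type*} [CommRing A] [AddCommGroup M] [Module A M]
    (f : M →ₗ[A] M →ₗ[A] M) (halt : ∀ v, f v v = 0) (a b : M) : f a b = - f b a := by
  have h := halt (a + b)
  simp only [map_add, LinearMap.add_apply, halt a, halt b, zero_add, add_zero] at h
  exact eq_neg_of_add_eq_zero_right h

theorem key_identity {A M : Type*} [CommRing A] [AddCommGroup M] [Module A M]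
    (f : M →ₗ[A] M →ₗ[A] M) (halt : ∀ v, f v v = 0) (X Y Z W : M) :
    f X (f (f Y Z) W + f (f Z W) Y + f (f W Y) Z)
    - f Y (f (f X Z) W + f (f Z W) X + f (f W X) Z)
    + f Z (f (f X Y) W + f (f Y W) X + f (f W X) Y)
    - f W (f (f X Y) Z + f (f Y Z) X + f (f Z X) Y)
    - (f (f (f X Y) Z) W + f (f Z W) (f X Y) + f (f W (f X Y)) Z)
    + (f (f (f X Z) Y) W + f (f Y W) (f X Z) + f (f W (f X Z)) Y)
    - (f (f (f X W) Y) Z + f (f Y Z) (f X W) + f (f Z (f X W)) Y)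
    - (f (f (f Y Z) X) W + f (f X W) (f Y Z) + f (f W (f Y Z)) X)
    + (f (f (f Y W) X) Z + f (f X Z) (f Y W) + f (f Z (f Y W)) X)
    - (f (f (f Z W) X) Y + f (f X Y) (f Z W) + f (f Y (f Z W)) X) = 0 := by
  have sk := bracket_skew f halt
  rw [sk X (f (f Y Z) W + f (f Z W) Y + f (f W Y) Z),
      sk Y (f (f X Z) W + f (f Z W) X + f (f W X) Z),
      sk Z (f (f X Y) W + f (f Y W) X + f (f W X) Y),
      sk W (f (f X Y) Z + f (f Y Z) X + f (f Z X) Y)]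
  simp only [map_add, LinearMap.add_apply, map_neg, LinearMap.neg_apply]
  rw [sk W X, sk W Y, sk Z X]
  simp only [map_add, map_neg, LinearMap.add_apply, LinearMap.neg_apply, neg_neg]
  rw [sk W (f X Y), sk W (f X Z), sk Z (f X W), sk W (f Y Z), sk Z (f Y W), sk Y (f Z W)]
  simp only [map_neg, LinearMap.neg_apply, neg_neg]
  rw [sk (f Z W) (f X Y), sk (f Y W) (f X Z), sk (f Y Z) (f X W)]
  abel

theorem scalar_lem (R : Type) [CommRing R] [IsDomain R] (π : R) (hπ : π ≠ 0) (k : ℕ)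
    (c : Rmod R π (k+1)) (h : (pbar R π k) ^ k * c = 0) :
    ∃ d, c = (pbar R π k) * d := by
  obtain ⟨r, rfl⟩ := Ideal.Quotient.mk_surjective c
  rw [pbar, ← map_pow, ← map_mul, Ideal.Quotient.eq_zero_iff_mem, Ideal.mem_span_singleton] at h
  obtain ⟨s, hs⟩ := h
  refine ⟨Ideal.Quotient.mk _ s, ?_⟩
  rw [pbar, ← map_mul]
  congr 1
  apply mul_left_cancel₀ (pow_ne_zero k hπ)
  rw [hs]; ring

theorem psi_inj (R : Type) [CommRing R] [IsDomain R] (π : R) (hπ : Irreducible π) (k : ℕ)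
    (B : Type) [AddCommGroup B] [Module (Rmod R π (k + 1)) B]
    [Module.Free (Rmod R π (k + 1)) B] [Module.Finite (Rmod R π (k + 1)) B]
    (q : Lbar R π k B) (hq : psi R π k B q = 0) : q = 0 := by
  obtain ⟨x, rfl⟩ := Submodule.mkQ_surjective _ q
  rw [Submodule.mkQ_apply, Submodule.Quotient.mk_eq_zero]
  have hx : (pbar R π k) ^ k • x = 0 := hq
  haveI : Nontrivial (Rmod R π (k+1)) := by
    refine Ideal.Quotient.nontrivial_iff.mpr ?_
    rw [Ne, Ideal.span_singleton_eq_top]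
    intro hu
    exact hπ.not_isUnit (isUnit_of_dvd_unit (dvd_pow_self π (Nat.succ_ne_zero k)) hu)
  let b := Module.Free.chooseBasis (Rmod R π (k+1)) B
  have hco : ∀ i, ∃ d, b.repr x i = (pbar R π k) * d := by
    intro i
    apply scalar_lem R π hπ.ne_zero k
    have : b.repr ((pbar R π k) ^ k • x) i = 0 := by rw [hx]; simp
    rwa [map_smul, Finsupp.smul_apply, smul_eq_mul] at this
  choose d hd using hco
  rw [← SetLike.mem_coe, Submodule.coe_pointwise_smul, Set.mem_smul_set]
  refine ⟨∑ i, d i • b i, trivial, ?_⟩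
  rw [Finset.smul_sum]
  calc ∑ i, (pbar R π k) • d i • b i = ∑ i, b.repr x i • b i := by
        refine Finset.sum_congr rfl fun i _ => ?_
        rw [smul_smul, ← hd i]
      _ = x := b.sum_repr x


/-- The 3-form `J ∈ Λ³(L̄, ad)` induced via `χ` from the Jacobiator of a
bracket algebra lift `(B,[·,·])` of the Lie algebra `L` is a cocycle for the
Chevalley–Eilenberg differential of `L̄` with adjoint coefficients: `dJ = 0`. -/
theorem stmt_6 (R : Type) [CommRing R] [IsDomain R] [IsDiscreteValuationRing R]
    (π : R) (hπ : Irreducible π) (k : ℕ) (hk : 1 ≤ k)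
    (B : Type) [AddCommGroup B] [Module (Rmod R π (k + 1)) B]
    [Module.Free (Rmod R π (k + 1)) B] [Module.Finite (Rmod R π (k + 1)) B]
    (br : B →ₗ[Rmod R π (k + 1)] B →ₗ[Rmod R π (k + 1)] B)
    (halt : ∀ v, br v v = 0)
    (brL : Lred R π k B →ₗ[Rmod R π (k + 1)] Lred R π k B →ₗ[Rmod R π (k + 1)] Lred R π k B)
    (hlift : ∀ x y : B, modk R π k B (br x y) = brL (modk R π k B x) (modk R π k B y))
    (hjacL : ∀ x y z : Lred R π k B, brL (brL x y) z + brL (brL y z) x + brL (brL z x) y = 0)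
    (brb : Lbar R π k B →ₗ[Rmod R π (k + 1)] Lbar R π k B →ₗ[Rmod R π (k + 1)] Lbar R π k B)
    (hbrb : ∀ x y : B, lam R π k B (br x y) = brb (lam R π k B x) (lam R π k B y))
    (J : Lbar R π k B →ₗ[Rmod R π (k + 1)] Lbar R π k B →ₗ[Rmod R π (k + 1)]
      Lbar R π k B →ₗ[Rmod R π (k + 1)] Lbar R π k B)
    (hJ : ∀ x y z : B, psi R π k B (J (lam R π k B x) (lam R π k B y) (lam R π k B z)) =
      br (br x y) z + br (br y z) x + br (br z x) y)
    :
    ∀ x y z w : Lbar R π k B,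
      brb x (J y z w) - brb y (J x z w) + brb z (J x y w) - brb w (J x y z)
      - J (brb x y) z w + J (brb x z) y w - J (brb x w) y z
      - J (brb y z) x w + J (brb y w) x z - J (brb z w) x y = 0 := by
  intro x y z w
  obtain ⟨X, hX⟩ := Submodule.mkQ_surjective (piB R π k B) x
  obtain ⟨Y, hY⟩ := Submodule.mkQ_surjective (piB R π k B) y
  obtain ⟨Z, hZ⟩ := Submodule.mkQ_surjective (piB R π k B) z
  obtain ⟨W, hW⟩ := Submodule.mkQ_surjective (piB R π k B) w
  obtain ⟨u1, hu1⟩ := Submodule.mkQ_surjective (piB R π k B) (J y z w)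
  obtain ⟨u2, hu2⟩ := Submodule.mkQ_surjective (piB R π k B) (J x z w)
  obtain ⟨u3, hu3⟩ := Submodule.mkQ_surjective (piB R π k B) (J x y w)
  obtain ⟨u4, hu4⟩ := Submodule.mkQ_surjective (piB R π k B) (J x y z)
  apply psi_inj R π hπ k B
  have e1 : (pbar R π k) ^ k • u1 = br (br Y Z) W + br (br Z W) Y + br (br W Y) Z := by
    have h := hJ Y Z W
    rw [show lam R π k B Y = y from hY, show lam R π k B Z = z from hZ,
        show lam R π k B W = w from hW, ← hu1, psi_apply] at h
    exact h
  have e2 : (pbar R π k) ^ k • u2 = br (br X Z) W + br (br Z W) X + br (br W X) Z := by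
    have h := hJ X Z W
    rw [show lam R π k B X = x from hX, show lam R π k B Z = z from hZ,
        show lam R π k B W = w from hW, ← hu2, psi_apply] at h
    exact h
  have e3 : (pbar R π k) ^ k • u3 = br (br X Y) W + br (br Y W) X + br (br W X) Y := by
    have h := hJ X Y W
    rw [show lam R π k B X = x from hX, show lam R π k B Y = y from hY,
        show lam R π k B W = w from hW, ← hu3, psi_apply] at h
    exact h
  have e4 : (pbar R π k) ^ k • u4 = br (br X Y) Z + br (br Y Z) X + br (br Z X) Y := by
    have h := hJ X Y Z
    rw [show lam R π k B X = x from hX, show lam R π k B Y = y from hY,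
        show lam R π k B Z = z from hZ, ← hu4, psi_apply] at h
    exact h
  have f1 : psi R π k B (brb x (J y z w)) = br X ((pbar R π k) ^ k • u1) := by
    rw [← hX, ← hu1, ← hbrb, psi_apply, ← map_smul]
  have f2 : psi R π k B (brb y (J x z w)) = br Y ((pbar R π k) ^ k • u2) := by
    rw [← hY, ← hu2, ← hbrb, psi_apply, ← map_smul]
  have f3 : psi R π k B (brb z (J x y w)) = br Z ((pbar R π k) ^ k • u3) := by
    rw [← hZ, ← hu3, ← hbrb, psi_apply, ← map_smul]
  have f4 : psi R π k B (brb w (J x y z)) = br W ((pbar R π k) ^ k • u4) := by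
    rw [← hW, ← hu4, ← hbrb, psi_apply, ← map_smul]
  have g1 : psi R π k B (J (brb x y) z w)
      = br (br (br X Y) Z) W + br (br Z W) (br X Y) + br (br W (br X Y)) Z := by
    rw [← hX, ← hY, ← hZ, ← hW, ← hbrb, hJ]
  have g2 : psi R π k B (J (brb x z) y w)
      = br (br (br X Z) Y) W + br (br Y W) (br X Z) + br (br W (br X Z)) Y := by
    rw [← hX, ← hY, ← hZ, ← hW, ← hbrb, hJ]
  have g3 : psi R π k B (J (brb x w) y z)
      = br (br (br X W) Y) Z + br (br Y Z) (br X W) + br (br Z (br X W)) Y := by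
    rw [← hX, ← hY, ← hZ, ← hW, ← hbrb, hJ]
  have g4 : psi R π k B (J (brb y z) x w)
      = br (br (br Y Z) X) W + br (br X W) (br Y Z) + br (br W (br Y Z)) X := by
    rw [← hX, ← hY, ← hZ, ← hW, ← hbrb, hJ]
  have g5 : psi R π k B (J (brb y w) x z)
      = br (br (br Y W) X) Z + br (br X Z) (br Y W) + br (br Z (br Y W)) X := by
    rw [← hX, ← hY, ← hZ, ← hW, ← hbrb, hJ]
  have g6 : psi R π k B (J (brb z w) x y)
      = br (br (br Z W) X) Y + br (br X Y) (br Z W) + br (br Y (br Z W)) X := by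
    rw [← hX, ← hY, ← hZ, ← hW, ← hbrb, hJ]
  simp only [map_sub, map_add]
  rw [f1, f2, f3, f4, g1, g2, g3, g4, g5, g6, e1, e2, e3, e4]
  exact key_identity br halt X Y Z W
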